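/- Let f_1 and f_2 be positive bumps on [0,1] with orbitals (a_1,b_1) and (a_2,b_2) respectively, and assume a_1 < a_2, b_2 < b_1, and b_2 ≤ f_1(a_2) (so that the orbital of f_2 lies inside a fundamental domain of f_1). Then the subgroup of Homeo_+([0,1]) generated by {f_1, f_2} is isomorphic to the restricted wreath product ℤ ≀ ℤ, i.e. to the semidirect product (⨁_{k∈ℤ} ℤ) ⋊ ℤ, where the generator of ℤ acts on the direct sum ⨁_{k∈ℤ} ℤ of copies of ℤ indexed by ℤ by shifting the index by 1. -/

import Mathlib

/-- The group of orientation-preserving homeomorphisms of `[0,1]`, modeled as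
order-isomorphisms of the unit interval. -/
abbrev Homeo := unitInterval ≃o unitInterval

/-- `f` is a positive bump with orbital `(a,b)`. -/
def IsPosBump (f : Homeo) (a b : ℝ) : Prop :=
  0 ≤ a ∧ a < b ∧ b ≤ 1 ∧
  (∀ x : unitInterval, (x : ℝ) ≤ (f x : ℝ)) ∧
  (∀ x : unitInterval, f x ≠ x ↔ a < (x : ℝ) ∧ (x : ℝ) < b)

/-- The shift automorphism of the direct sum `⨁_{k ∈ ℤ} ℤ` (modeled as finitely supported
functions `ℤ →₀ ℤ`), shifting the index by `1`. -/
noncomputable def shiftAut : MulAut (Multiplicative (ℤ →₀ ℤ)) :=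
  AddEquiv.toMultiplicative (Finsupp.domCongr (α := ℤ) (β := ℤ) (M := ℤ) (Equiv.addRight 1))

/-- The action of `ℤ` on `⨁_{k ∈ ℤ} ℤ` in which the generator shifts the index by `1`. -/
noncomputable def shiftAction : Multiplicative ℤ →* MulAut (Multiplicative (ℤ →₀ ℤ)) :=
  zpowersHom _ shiftAut

/-- The restricted wreath product `ℤ ≀ ℤ = (⨁_{k ∈ ℤ} ℤ) ⋊ ℤ`, where the generator of `ℤ`
acts on the direct sum of copies of `ℤ` indexed by `ℤ` by shifting the index by `1`. -/
abbrev WreathZZ := SemidirectProduct (Multiplicative (ℤ →₀ ℤ)) (Multiplicative ℤ) shiftAction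

/-! ### Auxiliary lemmas -/

section Aux

lemma wr_pow_apply_ge (f : Homeo) (h : ∀ x, x ≤ f x) : ∀ (n : ℕ) (x), x ≤ (f ^ n) x := by
  intro n
  induction n with
  | zero => intro x; simp
  | succ n ih => intro x; rw [pow_succ]; exact le_trans (h x) (ih (f x))

lemma wr_pow_apply_le (f : Homeo) (h : ∀ x, f x ≤ x) : ∀ (n : ℕ) (x), (f ^ n) x ≤ x := by
  intro n
  induction n with
  | zero => intro x; simp
  | succ n ih => intro x; rw [pow_succ]; exact le_trans (ih (f x)) (h x)

lemma wr_inv_apply_le (f : Homeo) (h : ∀ x, x ≤ f x) (x : unitInterval) : f⁻¹ x ≤ x := by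
  have := h (f⁻¹ x)
  have h2 : f (f⁻¹ x) = x := by
    change (f * f⁻¹) x = x
    rw [mul_inv_cancel]; rfl
  rwa [h2] at this

lemma wr_zpow_apply_ge (f : Homeo) (h : ∀ x, x ≤ f x) {n : ℤ} (hn : 1 ≤ n) (x : unitInterval) :
    f x ≤ (f ^ n) x := by
  obtain ⟨m, rfl⟩ : ∃ m : ℕ, n = (m : ℤ) + 1 := ⟨(n - 1).toNat, by omega⟩
  rw [show ((m : ℤ) + 1) = ((m + 1 : ℕ) : ℤ) by push_cast; ring, zpow_natCast, pow_succ]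
  exact wr_pow_apply_ge f h m (f x)

lemma wr_zpow_apply_le (f : Homeo) (h : ∀ x, x ≤ f x) {n : ℤ} (hn : n ≤ -1) (x : unitInterval) :
    (f ^ n) x ≤ f⁻¹ x := by
  obtain ⟨m, rfl⟩ : ∃ m : ℕ, n = -(((m : ℤ)) + 1) := ⟨(-n - 1).toNat, by omega⟩
  have h' : ∀ x, f⁻¹ x ≤ x := wr_inv_apply_le f h
  rw [show (-((m : ℤ) + 1)) = -((m + 1 : ℕ) : ℤ) by push_cast; ring, zpow_neg, zpow_natCast,
    ← inv_pow, pow_succ]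
  exact wr_pow_apply_le f⁻¹ h' m (f⁻¹ x)

lemma wr_fix_zpow (f : Homeo) (x : unitInterval) (hx : f x = x) (n : ℤ) : (f ^ n) x = x := by
  have hpow : ∀ m : ℕ, (f ^ m) x = x := by
    intro m
    induction m with
    | zero => rfl
    | succ m ih => rw [pow_succ]; show (f ^ m) (f x) = x; rw [hx]; exact ih
  rcases n with m | m
  · exact hpow m
  · rw [Int.negSucc_eq, zpow_neg]
    have hfix : (f ^ ((m : ℤ) + 1)) x = x := by
      rw [show ((m:ℤ)+1) = ((m+1 : ℕ) : ℤ) by push_cast; ring, zpow_natCast]; exact hpow _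
    set g := f ^ ((m : ℤ) + 1)
    calc g⁻¹ x = g⁻¹ (g x) := by rw [hfix]
    _ = (g⁻¹ * g) x := rfl
    _ = x := by rw [inv_mul_cancel]; rfl

lemma wr_moved_zpow (f : Homeo) (h : ∀ x, x ≤ f x) (x : unitInterval) (hx : x < f x)
    {n : ℤ} (hn : n ≠ 0) : (f ^ n) x ≠ x := by
  rcases lt_or_gt_of_ne hn with hneg | hpos
  · have h1 : (f ^ n) x ≤ f⁻¹ x := wr_zpow_apply_le f h (by omega) x
    have h2 : f⁻¹ x < x := by
      have := f.symm.strictMono hx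
      rwa [show f.symm (f x) = x from f.symm_apply_apply x] at this
    exact ne_of_lt (lt_of_le_of_lt h1 h2)
  · exact ne_of_gt (lt_of_lt_of_le hx (wr_zpow_apply_ge f h (by omega) x))

lemma wr_shiftAut_single (k m : ℤ) :
    shiftAut (Multiplicative.ofAdd (Finsupp.single k m)) =
      Multiplicative.ofAdd (Finsupp.single (k + 1) m) := by
  show Multiplicative.ofAdd (Finsupp.equivMapDomain (Equiv.addRight 1) (Finsupp.single k m)) = _
  rw [Finsupp.equivMapDomain_single, Equiv.coe_addRight]

lemma wr_shiftAut_symm_single (k m : ℤ) :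
    shiftAut⁻¹ (Multiplicative.ofAdd (Finsupp.single k m)) =
      Multiplicative.ofAdd (Finsupp.single (k - 1) m) := by
  have := wr_shiftAut_single (k - 1) m
  rw [sub_add_cancel] at this
  rw [← this]
  exact (shiftAut.symm_apply_apply _)

lemma wr_shift_single (n k m : ℤ) :
    shiftAction (Multiplicative.ofAdd n) (Multiplicative.ofAdd (Finsupp.single k m)) =
      Multiplicative.ofAdd (Finsupp.single (k + n) m) := by
  have key : ∀ n : ℤ, ∀ k, (shiftAut ^ n) (Multiplicative.ofAdd (Finsupp.single k m)) =
      Multiplicative.ofAdd (Finsupp.single (k + n) m) := by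
    intro n
    induction n using Int.induction_on with
    | zero => intro k; simp
    | succ i ih =>
        intro k
        rw [show ((i : ℤ) + 1) = 1 + i by ring, zpow_add, zpow_one]
        show shiftAut ((shiftAut ^ (i:ℤ)) _) = _
        rw [ih, wr_shiftAut_single]
        ring_nf
    | pred i ih =>
        intro k
        rw [show (-(i : ℤ) - 1) = -1 + -i by ring, zpow_add, zpow_neg_one]
        show shiftAut⁻¹ ((shiftAut ^ (-i:ℤ)) _) = _
        rw [ih, wr_shiftAut_symm_single]
        ring_nf
  rw [shiftAction, zpowersHom_apply]
  exact key n k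

variable {G : Type*} [Group G] (g : ℤ → G)
  (hcomm : ∀ x ∈ Set.range g, ∀ y ∈ Set.range g, x * y = y * x)

/-- The homomorphism `⨁_{k ∈ ℤ} ℤ →* G` sending `single k m` to `g k ^ m`, for a family
of pairwise commuting elements `g k`. -/
noncomputable def wrPhiOne : Multiplicative (ℤ →₀ ℤ) →* G := by
  letI : CommGroup (Subgroup.closure (Set.range g)) := Subgroup.closureCommGroupOfComm hcomm
  exact (Subgroup.closure (Set.range g)).subtype.comp
    (AddMonoidHom.toMultiplicativeLeft
      (Finsupp.liftAddHom (M := ℤ) (N := Additive (Subgroup.closure (Set.range g)))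
        (fun k => zmultiplesHom _ (Additive.ofMul
          (⟨g k, Subgroup.subset_closure (Set.mem_range_self k)⟩ :
            Subgroup.closure (Set.range g))))))

lemma wrPhiOne_single (k m : ℤ) :
    wrPhiOne g hcomm (Multiplicative.ofAdd (Finsupp.single k m)) = g k ^ m := by
  letI : CommGroup (Subgroup.closure (Set.range g)) := Subgroup.closureCommGroupOfComm hcomm
  simp only [wrPhiOne, MonoidHom.comp_apply, AddMonoidHom.coe_toMultiplicativeLeft,
    Function.comp_apply, toAdd_ofAdd, Finsupp.liftAddHom_apply_single, zmultiplesHom_apply,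
    ← ofMul_zpow, toMul_ofMul, Subgroup.coe_subtype, SubgroupClass.coe_zpow]

end Aux

/-- If the orbital of `f₂` lies inside a fundamental domain of `f₁`, then
`⟨f₁, f₂⟩ ≅ ℤ ≀ ℤ`. -/
theorem bumps_nested_iso_wreath
    (f₁ f₂ : Homeo) (a₁ b₁ a₂ b₂ : ℝ)
    (hf₁ : IsPosBump f₁ a₁ b₁) (hf₂ : IsPosBump f₂ a₂ b₂)
    (h₁ : a₁ < a₂) (h₂ : b₂ < b₁)
    (h₃ : ∀ x : unitInterval, (x : ℝ) = a₂ → b₂ ≤ (f₁ x : ℝ)) :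
    Nonempty ((Subgroup.closure {f₁, f₂} : Subgroup Homeo) ≃* WreathZZ) := by
  obtain ⟨ha₁0, hab₁, hb₁1, hle₁, hfix₁⟩ := hf₁
  obtain ⟨ha₂0, hab₂, hb₂1, hle₂, hfix₂⟩ := hf₂
  have hle₁' : ∀ x, x ≤ f₁ x := fun x => hle₁ x
  have hle₂' : ∀ x, x ≤ f₂ x := fun x => hle₂ x
  -- the marked points
  set p : unitInterval := ⟨a₂, ⟨ha₂0, le_trans (le_of_lt hab₂) hb₂1⟩⟩ with hpdef
  set q : unitInterval := ⟨(a₂ + b₂)/2, by constructor <;> [linarith; linarith]⟩ with hqdef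
  have hb₂le : b₂ ≤ (f₁ p : ℝ) := h₃ p rfl
  -- the conjugates g k = f₁^k f₂ f₁^{-k}
  set g : ℤ → Homeo := fun k => f₁ ^ k * f₂ * f₁ ^ (-k) with hgdef
  -- the "support" predicate for g k
  set P : ℤ → unitInterval → Prop :=
    fun k x => a₂ < (((f₁ ^ (-k)) x : unitInterval) : ℝ) ∧
      (((f₁ ^ (-k)) x : unitInterval) : ℝ) < b₂ with hPdef
  have hzpow_cancel : ∀ (j k : ℤ) (x : unitInterval),
      (f₁ ^ j) ((f₁ ^ k) x) = (f₁ ^ (j + k)) x := by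
    intro j k x
    show (f₁ ^ j * f₁ ^ k) x = _
    rw [← zpow_add]
  -- g k fixes x iff x is not in the support
  have hfixg : ∀ (k : ℤ) (x : unitInterval), g k x = x ↔ ¬ P k x := by
    intro k x
    set y := (f₁ ^ (-k)) x with hy
    have hyx : (f₁ ^ k) y = x := by rw [hy, hzpow_cancel, add_neg_cancel]; rfl
    have h1 : g k x = (f₁ ^ k) (f₂ y) := rfl
    rw [hPdef, h1]
    conv_lhs => rw [← hyx]
    constructor
    · intro h hPx
      exact (hfix₂ y).mpr hPx ((f₁ ^ k).injective h)
    · intro h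
      have h2 : f₂ y = y := not_not.mp (fun hne => h ((hfix₂ y).mp hne))
      rw [h2]
  -- key disjointness fact
  have hdisj : ∀ (m : ℤ) (y : unitInterval), a₂ ≤ (y : ℝ) → (y : ℝ) < b₂ →
      (m = 0 → (y : ℝ) ≤ a₂) →
      ¬ (a₂ < (((f₁ ^ m) y : unitInterval) : ℝ) ∧ (((f₁ ^ m) y : unitInterval) : ℝ) < b₂) := by
    intro m y hy1 hy2 hy0
    rcases lt_trichotomy m 0 with hm | hm | hm
    · -- m ≤ -1 : f₁^m y ≤ f₁⁻¹ y ≤ a₂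
      rintro ⟨hc1, -⟩
      have h1 : (f₁ ^ m) y ≤ f₁⁻¹ y := wr_zpow_apply_le f₁ hle₁' (by omega) y
      have h2 : y ≤ f₁ p := Subtype.coe_le_coe.mp (by linarith)
      have h3 : f₁⁻¹ y ≤ p := (f₁.symm_apply_le).mpr h2
      have h4 : ((f₁ ^ m) y : ℝ) ≤ a₂ :=
        le_trans (Subtype.coe_le_coe.mpr (le_trans h1 h3)) le_rfl
      linarith
    · -- m = 0
      subst hm
      rintro ⟨hc1, -⟩
      have h0 : (f₁ ^ (0:ℤ)) y = y := by rw [zpow_zero]; rfl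
      rw [h0] at hc1
      have := hy0 rfl
      linarith
    · -- m ≥ 1 : b₂ ≤ f₁ p ≤ f₁ y ≤ f₁^m y
      rintro ⟨-, hc2⟩
      have h1 : f₁ y ≤ (f₁ ^ m) y := wr_zpow_apply_ge f₁ hle₁' (by omega) y
      have h2 : f₁ p ≤ f₁ y := f₁.monotone (Subtype.coe_le_coe.mp hy1)
      have h4 : b₂ ≤ ((f₁ ^ m) y : ℝ) :=
        le_trans hb₂le (Subtype.coe_le_coe.mpr (le_trans h2 h1))
      linarith
  -- supports of distinct conjugates containing a common point force equality
  have hPdisj : ∀ (j k : ℤ) (x : unitInterval), j ≠ k → P j x → ¬ P k x := by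
    intro j k x hjk hPj hPk
    rw [hPdef] at hPj hPk
    obtain ⟨h1, h2⟩ := hPj
    have e : (f₁ ^ (j - k)) ((f₁ ^ (-j)) x) = (f₁ ^ (-k)) x := by
      rw [hzpow_cancel, show j - k + -j = -k by ring]
    refine hdisj (j - k) ((f₁ ^ (-j)) x) h1.le h2 (fun h0 => absurd (by omega : j = k) hjk) ?_
    rw [e]
    exact hPk
  -- the support is invariant under g k
  have hPinv : ∀ (k : ℤ) (x : unitInterval), P k x → P k (g k x) := by
    intro k x hPk
    rw [hPdef] at hPk ⊢
    obtain ⟨h1, h2⟩ := hPk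
    set y := (f₁ ^ (-k)) x with hy
    have e : (f₁ ^ (-k)) (g k x) = f₂ y := by
      show (f₁ ^ (-k)) ((f₁ ^ k) (f₂ y)) = f₂ y
      rw [hzpow_cancel, neg_add_cancel, zpow_zero]; rfl
    rw [e]
    constructor
    · exact lt_of_lt_of_le h1 (hle₂ y)
    · set B : unitInterval := ⟨b₂, ⟨le_trans ha₂0 hab₂.le, hb₂1⟩⟩ with hB
      have hfB : f₂ B = B := not_not.mp (fun hne => lt_irrefl b₂ ((hfix₂ B).mp hne).2)
      have hyB : y < B := Subtype.coe_lt_coe.mp h2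
      have : f₂ y < f₂ B := f₂.strictMono hyB
      rw [hfB] at this
      exact Subtype.coe_lt_coe.mpr this
  -- the conjugates commute pairwise
  have hcomm : ∀ x ∈ Set.range g, ∀ y ∈ Set.range g, x * y = y * x := by
    rintro _ ⟨j, rfl⟩ _ ⟨k, rfl⟩
    rcases eq_or_ne j k with rfl | hjk
    · rfl
    refine DFunLike.ext _ _ fun x => ?_
    show g j (g k x) = g k (g j x)
    by_cases hk : P k x
    · have h1 : ¬ P j x := fun hj => hPdisj j k x hjk hj hk
      have h2 : ¬ P j (g k x) := fun hj => hPdisj j k _ hjk hj (hPinv k x hk)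
      rw [(hfixg j x).mpr h1, (hfixg j _).mpr h2]
    · by_cases hj : P j x
      · have h2 : ¬ P k (g j x) := fun hk' => hPdisj k j _ hjk.symm hk' (hPinv j x hj)
        rw [(hfixg k x).mpr hk, (hfixg k _).mpr h2]
      · rw [(hfixg k x).mpr hk, (hfixg j x).mpr hj, (hfixg k x).mpr hk]
  -- the two homomorphisms
  set φ : Multiplicative (ℤ →₀ ℤ) →* Homeo := wrPhiOne g hcomm with hφdef
  set φ₂ : Multiplicative ℤ →* Homeo := zpowersHom Homeo f₁ with hφ₂def
  have hφsingle : ∀ k m : ℤ, φ (Multiplicative.ofAdd (Finsupp.single k m)) = g k ^ m :=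
    fun k m => wrPhiOne_single g hcomm k m
  -- conjugation identities
  have hconj : ∀ (n k : ℤ), f₁ ^ n * g k * (f₁ ^ n)⁻¹ = g (k + n) := by
    intro n k
    rw [hgdef]
    show f₁ ^ n * (f₁ ^ k * f₂ * f₁ ^ (-k)) * (f₁ ^ n)⁻¹ = f₁ ^ (k+n) * f₂ * f₁ ^ (-(k+n))
    group
  have hconjpow : ∀ (n k m : ℤ), f₁ ^ n * g k ^ m * (f₁ ^ n)⁻¹ = g (k + n) ^ m := by
    intro n k m
    rw [← hconj n k]
    simpa only [MulAut.conj_apply] using map_zpow (MulAut.conj (f₁ ^ n)) (g k) m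
  -- compatibility for the semidirect product lift
  have hcompat : ∀ n : Multiplicative ℤ,
      φ.comp ((shiftAction n).toMonoidHom) = (MulAut.conj (φ₂ n)).toMonoidHom.comp φ := by
    intro n
    refine MonoidHom.ext fun c => ?_
    simp only [MonoidHom.comp_apply, MulEquiv.coe_toMonoidHom, MulAut.conj_apply]
    have hφ₂n : φ₂ n = f₁ ^ (Multiplicative.toAdd n) := rfl
    have key : ∀ d : ℤ →₀ ℤ, φ (shiftAction n (Multiplicative.ofAdd d)) =
        φ₂ n * φ (Multiplicative.ofAdd d) * (φ₂ n)⁻¹ := by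
      intro d
      induction d using Finsupp.induction with
      | zero =>
          rw [show Multiplicative.ofAdd (0 : ℤ →₀ ℤ) = 1 from rfl]
          simp
      | single_add a b f haf hb ih =>
          rw [ofAdd_add]
          simp only [map_mul]
          have e1 : shiftAction n (Multiplicative.ofAdd (Finsupp.single a b)) =
              Multiplicative.ofAdd (Finsupp.single (a + Multiplicative.toAdd n) b) := by
            conv_lhs => rw [← ofAdd_toAdd n]
            exact wr_shift_single (Multiplicative.toAdd n) a b
          rw [e1, hφsingle, hφsingle, ih, hφ₂n, ← hconjpow (Multiplicative.toAdd n) a b]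
          group
    conv_lhs => rw [← ofAdd_toAdd c]
    conv_rhs => rw [← ofAdd_toAdd c]
    exact key (Multiplicative.toAdd c)
  set Φ : WreathZZ →* Homeo := SemidirectProduct.lift φ φ₂ hcompat with hΦdef
  -- products of conjugates fix common fixed points
  have hfixprod : ∀ (d : ℤ →₀ ℤ) (x : unitInterval), (∀ j, d j ≠ 0 → g j x = x) →
      φ (Multiplicative.ofAdd d) x = x := by
    intro d
    induction d using Finsupp.induction with
    | zero => intro x _; rw [show Multiplicative.ofAdd (0 : ℤ →₀ ℤ) = 1 from rfl, map_one]; rfl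
    | single_add a b f haf hb ih =>
        intro x hx
        have hfa : f a = 0 := Finsupp.notMem_support_iff.mp haf
        have hxa : g a x = x := by
          apply hx a
          rw [Finsupp.add_apply, Finsupp.single_eq_same, hfa, add_zero]
          exact hb
        have hxf : ∀ j, f j ≠ 0 → g j x = x := by
          intro j hj
          apply hx j
          rcases eq_or_ne j a with rfl | hja
          · exact absurd hfa hj
          · rw [Finsupp.add_apply, Finsupp.single_eq_of_ne' (Ne.symm hja), zero_add]
            exact hj
        rw [ofAdd_add, map_mul]
        show (φ (Multiplicative.ofAdd (Finsupp.single a b))) ((φ (Multiplicative.ofAdd f)) x) = x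
        rw [ih x hxf, hφsingle]
        exact wr_fix_zpow (g a) x hxa b
  -- every conjugate fixes the whole f₁-orbit of p
  have hfix_orbitp : ∀ (j n : ℤ), g j ((f₁ ^ n) p) = (f₁ ^ n) p := by
    intro j n
    rw [hfixg]
    simp only [hPdef]
    have e : (f₁ ^ (-j)) ((f₁ ^ n) p) = (f₁ ^ (n - j)) p := by
      rw [hzpow_cancel, show -j + n = n - j by ring]
    rw [e]
    exact hdisj (n - j) p le_rfl hab₂ (fun _ => le_rfl)
  -- conjugates with distinct index fix the translates of q
  have hfix_orbitq : ∀ (j k : ℤ), j ≠ k → g j ((f₁ ^ k) q) = (f₁ ^ k) q := by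
    intro j k hjk
    rw [hfixg]
    simp only [hPdef]
    have e : (f₁ ^ (-j)) ((f₁ ^ k) q) = (f₁ ^ (k - j)) q := by
      rw [hzpow_cancel, show -j + k = k - j by ring]
    rw [e]
    refine hdisj (k - j) q ?_ ?_ (fun h0 => absurd (by omega : j = k) hjk)
    · show a₂ ≤ (a₂ + b₂)/2; linarith
    · show (a₂ + b₂)/2 < b₂; linarith
  -- p and q are genuinely moved
  have hpltf : p < f₁ p :=
    lt_of_le_of_ne (hle₁' p) (Ne.symm ((hfix₁ p).mpr ⟨h₁, lt_trans hab₂ h₂⟩))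
  have hqltf : q < f₂ q := by
    refine lt_of_le_of_ne (hle₂' q) (Ne.symm ((hfix₂ q).mpr ⟨?_, ?_⟩))
    · show a₂ < (a₂ + b₂)/2; linarith
    · show (a₂ + b₂)/2 < b₂; linarith
  -- injectivity
  have hinj : Function.Injective Φ := by
    rw [injective_iff_map_eq_one]
    intro w hw
    obtain ⟨c, n⟩ := w
    have hw' : φ c * φ₂ n = 1 := hw
    have hφ₂n : φ₂ n = f₁ ^ (Multiplicative.toAdd n) := rfl
    have e1 : φ c ((f₁ ^ (Multiplicative.toAdd n)) p) = (f₁ ^ (Multiplicative.toAdd n)) p := by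
      conv_lhs => rw [← ofAdd_toAdd c]
      exact hfixprod (Multiplicative.toAdd c) _ (fun j _ => hfix_orbitp j (Multiplicative.toAdd n))
    have e2 : (f₁ ^ (Multiplicative.toAdd n)) p = p := by
      have h5 := congrArg (fun (h : Homeo) => h p) hw'
      rw [show (φ c * φ₂ n) p = φ c ((φ₂ n) p) from rfl, hφ₂n, e1] at h5
      exact h5
    have hn0 : Multiplicative.toAdd n = 0 := by
      by_contra hne
      exact wr_moved_zpow f₁ hle₁' p hpltf hne e2
    have hn1 : n = 1 := toAdd_eq_zero.mp hn0
    rw [hn1, map_one, mul_one] at hw'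
    have hc0 : c = 1 := by
      have hct : ∀ k, Multiplicative.toAdd c k = 0 := by
        intro k
        by_contra hck
        set x := (f₁ ^ k) q with hxdef
        have hfixerase : φ (Multiplicative.ofAdd
            (Finsupp.erase k (Multiplicative.toAdd c))) x = x := by
          apply hfixprod
          intro j hj
          have hjk : j ≠ k := by rintro rfl; rw [Finsupp.erase_same] at hj; exact hj rfl
          exact hfix_orbitq j k hjk
        have heval : φ c x = (g k ^ (Multiplicative.toAdd c k)) x := by
          calc φ c x = φ (Multiplicative.ofAdd
              ((Finsupp.single k (Multiplicative.toAdd c k)) +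
                Finsupp.erase k (Multiplicative.toAdd c))) x := by
                rw [Finsupp.single_add_erase, ofAdd_toAdd]
          _ = (φ (Multiplicative.ofAdd (Finsupp.single k (Multiplicative.toAdd c k))))
                ((φ (Multiplicative.ofAdd (Finsupp.erase k (Multiplicative.toAdd c)))) x) := by
                rw [ofAdd_add, map_mul]; rfl
          _ = (g k ^ (Multiplicative.toAdd c k)) x := by rw [hfixerase, hφsingle]
        have hx1 : φ c x = x := by rw [hw']; rfl
        have hgkx : (g k ^ (Multiplicative.toAdd c k)) x = x := by rw [← heval, hx1]
        have hgk : g k ^ (Multiplicative.toAdd c k) =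
            f₁ ^ k * f₂ ^ (Multiplicative.toAdd c k) * f₁ ^ (-k) := by
          have h6 := map_zpow (MulAut.conj (f₁ ^ k)) f₂ (Multiplicative.toAdd c k)
          simp only [MulAut.conj_apply] at h6
          rw [hgdef]
          show (f₁ ^ k * f₂ * f₁ ^ (-k)) ^ (Multiplicative.toAdd c k) = _
          rw [zpow_neg]
          exact h6.symm
        have h5 : (f₁ ^ (-k)) x = q := by
          rw [hxdef, hzpow_cancel, neg_add_cancel, zpow_zero]; rfl
        have h6 : (f₁ ^ k) ((f₂ ^ (Multiplicative.toAdd c k)) q) = (f₁ ^ k) q := by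
          rw [hgk] at hgkx
          rw [show (f₁ ^ k * f₂ ^ (Multiplicative.toAdd c k) * f₁ ^ (-k)) x =
            (f₁ ^ k) ((f₂ ^ (Multiplicative.toAdd c k)) ((f₁ ^ (-k)) x)) from rfl, h5] at hgkx
          rw [hgkx, hxdef]
        have hq' : (f₂ ^ (Multiplicative.toAdd c k)) q = q := (f₁ ^ k).injective h6
        exact wr_moved_zpow f₂ hle₂' q hqltf hck hq'
      have hc0' : Multiplicative.toAdd c = 0 := Finsupp.ext hct
      rw [← ofAdd_toAdd c, hc0']; rfl
    rw [hc0, hn1]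
    rfl
  -- the range is the closure of {f₁, f₂}
  have hmemg : ∀ k : ℤ, g k ∈ Subgroup.closure ({f₁, f₂} : Set Homeo) := by
    intro k
    have hm1 : f₁ ∈ Subgroup.closure ({f₁, f₂} : Set Homeo) :=
      Subgroup.subset_closure (Set.mem_insert _ _)
    have hm2 : f₂ ∈ Subgroup.closure ({f₁, f₂} : Set Homeo) :=
      Subgroup.subset_closure (Set.mem_insert_of_mem _ rfl)
    rw [hgdef]
    exact mul_mem (mul_mem (zpow_mem hm1 k) hm2) (zpow_mem hm1 (-k))
  have hφmem : ∀ d : ℤ →₀ ℤ,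
      φ (Multiplicative.ofAdd d) ∈ Subgroup.closure ({f₁, f₂} : Set Homeo) := by
    intro d
    induction d using Finsupp.induction with
    | zero =>
        rw [show Multiplicative.ofAdd (0 : ℤ →₀ ℤ) = 1 from rfl, map_one]
        exact one_mem _
    | single_add a b f haf hb ih =>
        rw [ofAdd_add, map_mul]
        exact mul_mem (by rw [hφsingle]; exact zpow_mem (hmemg a) b) ih
  have hrange : Φ.range = Subgroup.closure ({f₁, f₂} : Set Homeo) := by
    apply le_antisymm
    · rintro x ⟨w, rfl⟩
      have hΦw : Φ w = φ w.left * φ₂ w.right := rfl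
      rw [hΦw]
      refine mul_mem ?_ ?_
      · rw [← ofAdd_toAdd w.left]; exact hφmem _
      · show f₁ ^ (Multiplicative.toAdd w.right) ∈ _
        exact zpow_mem (Subgroup.subset_closure (Set.mem_insert _ _)) _
    · rw [Subgroup.closure_le]
      rintro x hx
      simp only [Set.mem_insert_iff, Set.mem_singleton_iff] at hx
      rcases hx with h | h
      · refine ⟨SemidirectProduct.inr (Multiplicative.ofAdd 1), ?_⟩
        rw [SemidirectProduct.lift_inr]
        show f₁ ^ (1 : ℤ) = x
        rw [zpow_one, h]
      · refine ⟨SemidirectProduct.inl (Multiplicative.ofAdd (Finsupp.single 0 1)), ?_⟩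
        rw [SemidirectProduct.lift_inl]
        show φ _ = x
        rw [hφsingle]
        show (f₁ ^ (0:ℤ) * f₂ * f₁ ^ (-(0:ℤ))) ^ (1:ℤ) = x
        rw [neg_zero, zpow_zero, one_mul, mul_one, zpow_one, h]
  exact ⟨(MulEquiv.subgroupCongr hrange.symm).trans (MonoidHom.ofInjective hinj).symm⟩
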